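/- Let q ≥ 3 and n ≥ 3. If n is odd then |A_q(n)| = Σ_{i=0}^{⌊n/2⌋} M_{q−2}(i)·M_{q−2}(n−i−2), and if n is even then |A_q(n)| = Σ_{i=0}^{n/2} M_{q−2}(i)·M_{q−2}(n−i−2) − (M_{q−2}(n/2 − 2))². -/
import Mathlib


/-- Value of a letter: 1 ↦ +1, 0 ↦ -1, other letters ↦ 0. -/
def mval (a : ℕ) : ℤ := if a = 1 then 1 else if a = 0 then -1 else 0

/-- Value-sum of a word. -/
def vsum (w : List ℕ) : ℤ := (w.map mval).sum

/-- A (q-2)-colored Motzkin word over the alphabet Z_q = {0,...,q-1}: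
all letters < q, every prefix has nonnegative value-sum, total value-sum 0. -/
def IsMotzkinWord (q : ℕ) (w : List ℕ) : Prop :=
  (∀ a ∈ w, a < q) ∧ (∀ u, u <+: w → 0 ≤ vsum u) ∧ vsum w = 0

/-- The set 𝓜_{q-2}(n) of (q-2)-colored Motzkin words of length n. -/
def MotzkinSet (q n : ℕ) : Set (List ℕ) := {w | w.length = n ∧ IsMotzkinWord q w}

/-- M_{q-2}(n), the number of (q-2)-colored Motzkin words of length n. -/
noncomputable def Mnum (q n : ℕ) : ℕ := (MotzkinSet q n).ncard

/-- The set Ê_{q-2}(n) of elevated (q-2)-colored Motzkin words of length n: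
words 1α0 with α ∈ 𝓜_{q-2}(n-2). -/
def ElevatedSet (q n : ℕ) : Set (List ℕ) :=
  {w | w.length = n ∧ ∃ α ∈ MotzkinSet q (n - 2), w = 1 :: (α ++ [0])}

/-- The set A_q(n). -/
def SetA (q n : ℕ) : Set (List ℕ) :=
  {w | ∃ i ≤ n / 2, ∃ α ∈ MotzkinSet q i, ∃ β ∈ ElevatedSet q (n - i), w = α ++ β} \
    {w | ∃ α ∈ ElevatedSet q (n / 2), ∃ β ∈ ElevatedSet q (n / 2), w = α ++ β}

/-- The set B_q(n). -/
def SetB (q n : ℕ) : Set (List ℕ) :=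
  {w | ∃ i ≤ n / 2 - 1, ∃ α ∈ MotzkinSet q i, ∃ β ∈ ElevatedSet q (n - i - 1),
    w = 1 :: (α ++ β)}

/-- The set C_q(n): words γ0 with γ a (q-2)-colored Motzkin word of length n-1
having no factor which is an elevated Motzkin word of length j ≥ ⌈n/2⌉. -/
def SetC (q n : ℕ) : Set (List ℕ) :=
  {w | ∃ γ ∈ MotzkinSet q (n - 1),
    (∀ j, (n + 1) / 2 ≤ j → ∀ β ∈ ElevatedSet q j, ¬ β <:+: γ) ∧ w = γ ++ [0]}

/-- The cross-bifix-free candidate set CBFS_q(n). -/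
def CBFS (q n : ℕ) : Set (List ℕ) := SetA q n ∪ SetB q n ∪ SetC q n

/-- A word is bifix-free if no nonempty proper prefix of it is also a suffix of it. -/
def BifixFree (w : List ℕ) : Prop :=
  ∀ u, u <+: w → u ≠ [] → u.length < w.length → ¬ u <:+ w

/-- BF_q(n): the set of bifix-free words of length n over Z_q. -/
def BF (q n : ℕ) : Set (List ℕ) := {w | w.length = n ∧ (∀ a ∈ w, a < q) ∧ BifixFree w}

/-- F_{k,q}(n): the number of words of length n over Z_q avoiding k consecutive 0's. -/
noncomputable def Fcount (k q n : ℕ) : ℕ :=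
  {w : List ℕ | w.length = n ∧ (∀ a ∈ w, a < q) ∧ ¬ List.replicate k 0 <:+: w}.ncard

/-- The set S_{k,q}(n) of Bajic--Stojanovic--Chee--Kiah type words: words s of length n
over Z_q with s₁ = ⋯ = s_k = 0, s_{k+1} ≠ 0, s_n ≠ 0, and such that the subword
s_{k+2} ⋯ s_{n-1} contains no k consecutive 0's. -/
def SetS (q k n : ℕ) : Set (List ℕ) :=
  {s | s.length = n ∧ (∀ a ∈ s, a < q) ∧ s.take k = List.replicate k 0 ∧
    s.getD k 0 ≠ 0 ∧ s.getLast? ≠ some 0 ∧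
    ¬ List.replicate k 0 <:+: (s.drop (k + 1)).take (n - k - 2)}

section Helpers

lemma vsum_nil : vsum [] = 0 := rfl

lemma vsum_cons (a : ℕ) (l : List ℕ) : vsum (a :: l) = mval a + vsum l := by
  simp [vsum]

lemma vsum_append (a b : List ℕ) : vsum (a ++ b) = vsum a + vsum b := by
  simp [vsum]

lemma mval_one : mval 1 = 1 := rfl
lemma mval_zero : mval 0 = -1 := rfl

/-- Words of fixed length with bounded letters form a finite set. -/
lemma finite_bddWords (q n : ℕ) :
    {w : List ℕ | w.length = n ∧ ∀ a ∈ w, a < q}.Finite := by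
  apply Set.Finite.subset
    (Set.finite_range (fun g : Fin n → Fin q => List.ofFn (fun i => (g i : ℕ))))
  rintro w ⟨hl, hb⟩
  subst hl
  refine ⟨fun i => ⟨w[(i : ℕ)], hb _ (List.getElem_mem _)⟩, ?_⟩
  simp [List.ofFn_getElem]

lemma motzkinSet_finite (q n : ℕ) : (MotzkinSet q n).Finite :=
  (finite_bddWords q n).subset (fun w hw => ⟨hw.1, hw.2.1⟩)

lemma elevatedSet_finite {q : ℕ} (hq : 2 ≤ q) (n : ℕ) : (ElevatedSet q n).Finite := by
  apply (finite_bddWords q n).subset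
  rintro w ⟨hl, α, hα, rfl⟩
  refine ⟨hl, ?_⟩
  intro a ha
  rcases List.mem_cons.1 ha with rfl | ha
  · omega
  · rcases List.mem_append.1 ha with ha | ha
    · exact hα.2.1 a ha
    · simp at ha; omega

lemma length_of_mem_elevated {q n : ℕ} {w : List ℕ} (h : w ∈ ElevatedSet q n) :
    w.length = n := h.1

/-- An elevated word is itself a Motzkin word. -/
lemma elevated_isMotzkin {q : ℕ} (hq : 2 ≤ q) {γ : List ℕ} (hγ : IsMotzkinWord q γ) :
    IsMotzkinWord q (1 :: (γ ++ [0])) := by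
  obtain ⟨hb, hpre, htot⟩ := hγ
  refine ⟨?_, ?_, ?_⟩
  · intro a ha
    rcases List.mem_cons.1 ha with rfl | ha
    · omega
    · rcases List.mem_append.1 ha with ha | ha
      · exact hb a ha
      · simp at ha; omega
  · intro u hu
    rcases u with _ | ⟨x, v⟩
    · simp [vsum_nil]
    · obtain ⟨hx, hv⟩ := List.cons_prefix_cons.1 hu
      subst hx
      rw [vsum_cons, mval_one]
      have hv' : v = (γ ++ [0]).take v.length := List.prefix_iff_eq_take.1 hv
      by_cases hlen : v.length ≤ γ.length
      · have : v = γ.take v.length := by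
          conv_lhs => rw [hv']
          rw [List.take_append_of_le_length hlen]
        have h0 := hpre (γ.take v.length) (List.take_prefix _ _)
        rw [← this] at h0
        omega
      · have hle : v.length ≤ γ.length + 1 := by
          have := hv.length_le; simpa using this
        have hlen' : v.length = γ.length + 1 := by omega
        have : v = γ ++ [0] := by
          rw [hv', hlen']
          apply List.take_of_length_le
          simp
        rw [this, vsum_append, htot]
        simp [vsum_cons, vsum_nil, mval_zero]
  · rw [vsum_cons, mval_one, vsum_append, htot]
    simp [vsum_cons, vsum_nil, mval_zero]

lemma elevatedSet_eq_image {q n : ℕ} (hn : 2 ≤ n) :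
    ElevatedSet q n = (fun γ => 1 :: (γ ++ [0])) '' MotzkinSet q (n - 2) := by
  ext w
  constructor
  · rintro ⟨hl, α, hα, rfl⟩
    exact ⟨α, hα, rfl⟩
  · rintro ⟨α, hα, rfl⟩
    refine ⟨?_, α, hα, rfl⟩
    have := hα.1
    simp [this]
    omega

lemma elevatedSet_ncard {q n : ℕ} (hn : 2 ≤ n) :
    (ElevatedSet q n).ncard = Mnum q (n - 2) := by
  rw [elevatedSet_eq_image hn, Set.ncard_image_of_injective, Mnum]
  intro a b h
  simp only [List.cons.injEq, List.append_left_inj] at h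
  exact h.2

lemma elevated_mem_motzkin {q n : ℕ} (hq : 2 ≤ q) (hn : 2 ≤ n) {w : List ℕ}
    (h : w ∈ ElevatedSet q n) : w ∈ MotzkinSet q n := by
  obtain ⟨hl, α, hα, rfl⟩ := h
  exact ⟨hl, elevated_isMotzkin hq hα.2⟩

/-- Strict positivity of prefix sums strictly inside the elevated part. -/
lemma key_pos {q i k : ℕ} {α γ : List ℕ} (hα : α ∈ MotzkinSet q i)
    (hγ : IsMotzkinWord q γ) (hik : i < k) (hk : k < i + (γ.length + 2)) :
    1 ≤ vsum ((α ++ 1 :: (γ ++ [0])).take k) := by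
  have hαl : α.length = i := hα.1
  rw [List.take_append, List.take_of_length_le (by omega),
    hαl]
  have hk1 : 1 ≤ k - i := by omega
  have : (1 :: (γ ++ [0])).take (k - i) = 1 :: (γ ++ [0]).take (k - i - 1) := by
    obtain ⟨m, hm⟩ : ∃ m, k - i = m + 1 := ⟨k - i - 1, by omega⟩
    rw [hm]; simp [List.take_cons]
  rw [this]
  have hlen : k - i - 1 ≤ γ.length := by omega
  rw [List.take_append_of_le_length hlen, vsum_append, vsum_cons, mval_one,
    hα.2.2.2]
  have := hγ.2.1 _ (List.take_prefix (k - i - 1) γ)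
  omega

lemma ncard_sprod {α β : Type*} {s : Set α} {t : Set β} (hs : s.Finite) (ht : t.Finite) :
    (s ×ˢ t).ncard = s.ncard * t.ncard := by
  rw [Set.ncard_eq_toFinset_card _ (hs.prod ht), Set.ncard_eq_toFinset_card _ hs,
    Set.ncard_eq_toFinset_card _ ht, ← Set.Finite.toFinset_prod hs ht,
    Finset.card_product]

lemma ncard_finsetBiUnion {ι α : Type*} {s : Finset ι} {P : ι → Set α}
    (hf : ∀ i ∈ s, (P i).Finite)
    (hd : ∀ i ∈ s, ∀ j ∈ s, i ≠ j → Disjoint (P i) (P j)) :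
    (⋃ i ∈ s, P i).ncard = ∑ i ∈ s, (P i).ncard := by
  classical
  induction s using Finset.induction_on with
  | empty => simp
  | @insert a s ha ih =>
    rw [Finset.set_biUnion_insert, Finset.sum_insert ha,
      Set.ncard_union_eq ?_ (hf a (Finset.mem_insert_self a s)) ?_,
      ih (fun i hi => hf i (Finset.mem_insert_of_mem hi))
        (fun i hi j hj hij => hd i (Finset.mem_insert_of_mem hi) j
          (Finset.mem_insert_of_mem hj) hij)]
    · rw [Set.disjoint_iUnion_right]
      intro i
      rw [Set.disjoint_iUnion_right]
      intro hi
      exact hd a (Finset.mem_insert_self a s) i (Finset.mem_insert_of_mem hi)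
        (by rintro rfl; exact ha hi)
    · exact Set.Finite.biUnion s.finite_toSet
        (fun i hi => hf i (Finset.mem_insert_of_mem hi))

end Helpers

/-- If n is odd then |A_q(n)| = Σ_{i=0}^{⌊n/2⌋} M_{q-2}(i)·M_{q-2}(n-i-2);
if n is even then |A_q(n)| = Σ_{i=0}^{n/2} M_{q-2}(i)·M_{q-2}(n-i-2) − M_{q-2}(n/2-2)². -/
theorem setA_card (q n : ℕ) (hq : 3 ≤ q) (hn : 3 ≤ n) :
    (Odd n → (SetA q n).ncard =
      ∑ i ∈ Finset.range (n / 2 + 1), Mnum q i * Mnum q (n - i - 2)) ∧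
    (Even n → ((SetA q n).ncard : ℤ) =
      ∑ i ∈ Finset.range (n / 2 + 1), (Mnum q i : ℤ) * (Mnum q (n - i - 2) : ℤ) -
        (Mnum q (n / 2 - 2) : ℤ) ^ 2) := by
  have hq2 : 2 ≤ q := by omega
  set U : Set (List ℕ) :=
    {w | ∃ i ≤ n / 2, ∃ α ∈ MotzkinSet q i, ∃ β ∈ ElevatedSet q (n - i), w = α ++ β}
    with hUdef
  set D : Set (List ℕ) :=
    {w | ∃ α ∈ ElevatedSet q (n / 2), ∃ β ∈ ElevatedSet q (n / 2), w = α ++ β}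
    with hDdef
  have hSetA : SetA q n = U \ D := rfl
  set P : ℕ → Set (List ℕ) := fun i =>
    (fun p : List ℕ × List ℕ => p.1 ++ p.2) '' (MotzkinSet q i ×ˢ ElevatedSet q (n - i))
    with hP
  have hPfin : ∀ i, (P i).Finite := fun i =>
    ((motzkinSet_finite q i).prod (elevatedSet_finite hq2 _)).image _
  have hUeq : U = ⋃ i ∈ Finset.range (n / 2 + 1), P i := by
    ext w
    simp only [hUdef, Set.mem_setOf_eq, Set.mem_iUnion, Finset.mem_range, hP,
      Set.mem_image, Set.mem_prod, Prod.exists]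
    constructor
    · rintro ⟨i, hi, α, hα, β, hβ, rfl⟩
      exact ⟨i, by omega, α, β, ⟨hα, hβ⟩, rfl⟩
    · rintro ⟨i, hi, α, β, ⟨hα, hβ⟩, rfl⟩
      exact ⟨i, by omega, α, hα, β, hβ, rfl⟩
  have hDisj : ∀ i ∈ Finset.range (n / 2 + 1), ∀ j ∈ Finset.range (n / 2 + 1),
      i ≠ j → Disjoint (P i) (P j) := by
    have hdisj' : ∀ i j : ℕ, i < j → j ≤ n / 2 → ∀ w, w ∈ P i → w ∈ P j → False := by
      intro i j hij hj w hwi hwj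
      simp only [hP, Set.mem_image, Set.mem_prod, Prod.exists] at hwi hwj
      obtain ⟨α, β, ⟨hα, hβ⟩, rfl⟩ := hwi
      obtain ⟨hβl, γ, hγ, rfl⟩ := hβ
      obtain ⟨α', β', ⟨hα', hβ'⟩, heq⟩ := hwj
      have hα'l : α'.length = j := hα'.1
      have h0 : vsum ((α ++ 1 :: (γ ++ [0])).take j) = 0 := by
        rw [← heq, List.take_left' hα'l]
        exact hα'.2.2.2
      have hγl : γ.length = n - i - 2 := hγ.1
      have hineq : i < n / 2 := by omega
      have h1 : 1 ≤ vsum ((α ++ 1 :: (γ ++ [0])).take j) :=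
        key_pos hα hγ.2 hij (by omega)
      omega
    intro i hi j hj hij
    simp only [Finset.mem_range] at hi hj
    rw [Set.disjoint_left]
    intro w hwi hwj
    rcases Nat.lt_or_ge i j with h | h
    · exact hdisj' i j h (by omega) w hwi hwj
    · exact hdisj' j i (by omega) (by omega) w hwj hwi
  have hPcard : ∀ i ∈ Finset.range (n / 2 + 1),
      (P i).ncard = Mnum q i * Mnum q (n - i - 2) := by
    intro i hi
    simp only [Finset.mem_range] at hi
    have h2 : 2 ≤ n - i := by omega
    have hinj : Set.InjOn (fun p : List ℕ × List ℕ => p.1 ++ p.2)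
        (MotzkinSet q i ×ˢ ElevatedSet q (n - i)) := by
      rintro ⟨a, b⟩ ⟨ha, hb⟩ ⟨c, d⟩ ⟨hc, hd⟩ h
      dsimp at h ha hb hc hd
      have := List.append_inj h (ha.1.trans hc.1.symm)
      simp [Prod.ext_iff, this.1, this.2]
    rw [hP]
    rw [Set.ncard_image_of_injOn hinj,
      ncard_sprod (motzkinSet_finite q i) (elevatedSet_finite hq2 _),
      elevatedSet_ncard h2]
    rfl
  have hUfin : U.Finite := by
    rw [hUeq]
    exact Set.Finite.biUnion (Finset.range _).finite_toSet (fun i _ => hPfin i)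
  have hUncard : U.ncard = ∑ i ∈ Finset.range (n / 2 + 1), Mnum q i * Mnum q (n - i - 2) := by
    rw [hUeq, ncard_finsetBiUnion (fun i _ => hPfin i) hDisj]
    exact Finset.sum_congr rfl hPcard
  constructor
  · intro hodd
    have hne : 2 * (n / 2) ≠ n := by
      rcases hodd with ⟨k, hk⟩; omega
    have hUD : Disjoint U D := by
      rw [Set.disjoint_left]
      rintro w ⟨i, hi, α, hα, β, hβ, rfl⟩ ⟨α', hα', β', hβ', heq⟩
      have h1 : (α ++ β).length = n := by
        have := hα.1; have := hβ.1
        simp only [List.length_append, this]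
        omega
      have h2 : (α ++ β).length = 2 * (n / 2) := by
        rw [heq]
        have := hα'.1; have := hβ'.1
        simp only [List.length_append, this]
        omega
      omega
    rw [hSetA, hUD.sdiff_eq_left, hUncard]
  · intro heven
    have h2m : 2 * (n / 2) = n := by
      rcases heven with ⟨k, hk⟩; omega
    have hm2 : 2 ≤ n / 2 := by omega
    have hDeq : D = (fun p : List ℕ × List ℕ => p.1 ++ p.2) ''
        (ElevatedSet q (n / 2) ×ˢ ElevatedSet q (n / 2)) := by
      ext w
      simp only [hDdef, Set.mem_setOf_eq, Set.mem_image, Set.mem_prod, Prod.exists]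
      constructor
      · rintro ⟨α, hα, β, hβ, rfl⟩; exact ⟨α, β, ⟨hα, hβ⟩, rfl⟩
      · rintro ⟨α, β, ⟨hα, hβ⟩, rfl⟩; exact ⟨α, hα, β, hβ, rfl⟩
    have hDcard : D.ncard = Mnum q (n / 2 - 2) * Mnum q (n / 2 - 2) := by
      have hinj : Set.InjOn (fun p : List ℕ × List ℕ => p.1 ++ p.2)
          (ElevatedSet q (n / 2) ×ˢ ElevatedSet q (n / 2)) := by
        rintro ⟨a, b⟩ ⟨ha, hb⟩ ⟨c, d⟩ ⟨hc, hd⟩ h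
        dsimp at h ha hb hc hd
        have := List.append_inj h (ha.1.trans hc.1.symm)
        simp [Prod.ext_iff, this.1, this.2]
      rw [hDeq, Set.ncard_image_of_injOn hinj,
        ncard_sprod (elevatedSet_finite hq2 _) (elevatedSet_finite hq2 _),
        elevatedSet_ncard hm2]
    have hDsub : D ⊆ U := by
      rintro w ⟨α, hα, β, hβ, rfl⟩
      refine ⟨n / 2, le_refl _, α, elevated_mem_motzkin hq2 hm2 hα, β, ?_, rfl⟩
      have : n - n / 2 = n / 2 := by omega
      rw [this]
      exact hβ
    have hDle : D.ncard ≤ U.ncard := Set.ncard_le_ncard hDsub hUfin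
    rw [hSetA, Set.ncard_diff hDsub (hUfin.subset hDsub), Nat.cast_sub hDle,
      hUncard, hDcard]
    push_cast
    ring
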